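/- A polynomial g(y,z) = a + by + cz + dyz with nonnegative coefficients a, b, c, d is log-concave on the positive orthant if and only if 2bc ≥ ad. -/

import Mathlib

lemma logQuadConcave (α β γ : ℝ)
    (hpos : ∀ t ∈ Set.Icc (0:ℝ) 1, 0 < α + β*t + γ*t^2)
    (hkey : ∀ t ∈ Set.Ioo (0:ℝ) 1, 2*γ*(α + β*t + γ*t^2) ≤ (β + 2*γ*t)^2) :
    ConcaveOn ℝ (Set.Icc (0:ℝ) 1) (fun t => Real.log (α + β*t + γ*t^2)) := by
  set Q : ℝ → ℝ := fun t => α + β*t + γ*t^2 with hQ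
  set Q' : ℝ → ℝ := fun t => β + 2*γ*t with hQ'
  set f : ℝ → ℝ := fun t => Real.log (Q t) with hf
  set g1 : ℝ → ℝ := fun t => Q' t / Q t with hg1
  have hQder : ∀ t : ℝ, HasDerivAt Q (Q' t) t := by
    intro t
    have h := ((hasDerivAt_id t).const_mul β).add ((hasDerivAt_pow 2 t).const_mul γ)
    have h2 := (hasDerivAt_const t α).add h
    exact (h2.congr_deriv (show _ = Q' t by simp [hQ']; ring)).congr_of_eventuallyEq (Filter.Eventually.of_forall fun x => by simp [hQ]; ring)
  have hQ'der : ∀ t : ℝ, HasDerivAt Q' (2*γ) t := by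
    intro t
    exact ((hasDerivAt_const t β).add ((hasDerivAt_id t).const_mul (2*γ))).congr_deriv (by ring)
  have hfder : ∀ t ∈ Set.Icc (0:ℝ) 1, HasDerivAt f (g1 t) t := by
    intro t ht
    exact (hQder t).log (hpos t ht).ne'
  have hg1der : ∀ t ∈ Set.Icc (0:ℝ) 1,
      HasDerivAt g1 ((2*γ * Q t - Q' t * Q' t) / (Q t)^2) t := by
    intro t ht
    exact (hQ'der t).div (hQder t) (hpos t ht).ne'
  have heqOn : Set.EqOn (deriv f) g1 (Set.Ioo (0:ℝ) 1) := by
    intro t ht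
    exact (hfder t (Set.Ioo_subset_Icc_self ht)).deriv
  apply concaveOn_of_deriv2_nonpos (convex_Icc 0 1)
  · apply ContinuousOn.log
    · exact (Continuous.continuousOn (by continuity))
    · exact fun t ht => (hpos t ht).ne'
  · rw [interior_Icc]
    intro t ht
    exact ((hfder t (Set.Ioo_subset_Icc_self ht)).differentiableAt).differentiableWithinAt
  · rw [interior_Icc]
    intro t ht
    have hev : deriv f =ᶠ[nhds t] g1 :=
      Filter.eventuallyEq_of_mem (isOpen_Ioo.mem_nhds ht) heqOn
    have : DifferentiableAt ℝ g1 t :=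
      (hg1der t (Set.Ioo_subset_Icc_self ht)).differentiableAt
    exact (hev.differentiableAt_iff.mpr this).differentiableWithinAt
  · rw [interior_Icc]
    intro t ht
    have hev : deriv f =ᶠ[nhds t] g1 :=
      Filter.eventuallyEq_of_mem (isOpen_Ioo.mem_nhds ht) heqOn
    have h2 : deriv (deriv f) t = deriv g1 t := hev.deriv_eq
    have h3 : deriv g1 t = (2*γ * Q t - Q' t * Q' t) / (Q t)^2 :=
      (hg1der t (Set.Ioo_subset_Icc_self ht)).deriv
    have : deriv^[2] f t = (2*γ * Q t - Q' t * Q' t) / (Q t)^2 := by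
      rw [Function.iterate_succ_apply', Function.iterate_one, h2, h3]
    rw [this]
    apply div_nonpos_of_nonpos_of_nonneg
    · have := hkey t ht
      simp only [hQ, hQ']
      nlinarith [hkey t ht]
    · positivity

set_option maxHeartbeats 1000000 in
lemma reverse_dir (a b c d : ℝ) (ha : 0 ≤ a) (hb : 0 ≤ b) (hc : 0 ≤ c) (hd : 0 ≤ d)
    (h2 : a * d ≤ 2 * (b * c))
    (y₁ z₁ y₂ z₂ : ℝ) (hy₁ : 0 ≤ y₁) (hz₁ : 0 ≤ z₁) (hy₂ : 0 ≤ y₂) (hz₂ : 0 ≤ z₂)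
    (l : ℝ) (hl0 : 0 ≤ l) (hl1 : l ≤ 1) :
    (a + b * y₁ + c * z₁ + d * y₁ * z₁) ^ l *
        (a + b * y₂ + c * z₂ + d * y₂ * z₂) ^ (1 - l) ≤
      a + b * (l * y₁ + (1 - l) * y₂) + c * (l * z₁ + (1 - l) * z₂) +
        d * (l * y₁ + (1 - l) * y₂) * (l * z₁ + (1 - l) * z₂) := by
  have hY : 0 ≤ l * y₁ + (1 - l) * y₂ :=
    add_nonneg (mul_nonneg hl0 hy₁) (mul_nonneg (by linarith) hy₂)
  have hZ : 0 ≤ l * z₁ + (1 - l) * z₂ :=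
    add_nonneg (mul_nonneg hl0 hz₁) (mul_nonneg (by linarith) hz₂)
  have hRHS : 0 ≤ a + b * (l * y₁ + (1 - l) * y₂) + c * (l * z₁ + (1 - l) * z₂) +
      d * (l * y₁ + (1 - l) * y₂) * (l * z₁ + (1 - l) * z₂) := by
    have := mul_nonneg (mul_nonneg hd hY) hZ
    have := mul_nonneg hb hY
    have := mul_nonneg hc hZ
    linarith
  rcases eq_or_lt_of_le hl0 with h0 | h0
  · rw [← h0]; norm_num
  rcases eq_or_lt_of_le hl1 with h1 | h1
  · rw [h1]; norm_num
  have hg10 : 0 ≤ a + b * y₁ + c * z₁ + d * y₁ * z₁ := by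
    have := mul_nonneg (mul_nonneg hd hy₁) hz₁
    have := mul_nonneg hb hy₁
    have := mul_nonneg hc hz₁
    linarith
  have hg20 : 0 ≤ a + b * y₂ + c * z₂ + d * y₂ * z₂ := by
    have := mul_nonneg (mul_nonneg hd hy₂) hz₂
    have := mul_nonneg hb hy₂
    have := mul_nonneg hc hz₂
    linarith
  rcases eq_or_lt_of_le hg10 with hg1 | hg1
  · rw [← hg1, Real.zero_rpow (ne_of_gt h0), zero_mul]; exact hRHS
  rcases eq_or_lt_of_le hg20 with hg2 | hg2
  · rw [← hg2, Real.zero_rpow (by linarith : (1:ℝ) - l ≠ 0), mul_zero]; exact hRHS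
  -- main case
  obtain ⟨α, hα⟩ : ∃ x : ℝ, x = a + b * y₂ + c * z₂ + d * y₂ * z₂ := ⟨_, rfl⟩
  obtain ⟨β, hβ⟩ : ∃ x : ℝ,
      x = b * (y₁ - y₂) + c * (z₁ - z₂) + d * ((y₁ - y₂) * z₂ + y₂ * (z₁ - z₂)) := ⟨_, rfl⟩
  obtain ⟨γ, hγ⟩ : ∃ x : ℝ, x = d * (y₁ - y₂) * (z₁ - z₂) := ⟨_, rfl⟩
  have hQeq : ∀ t : ℝ, α + β * t + γ * t ^ 2 =
      a + b * (t * y₁ + (1 - t) * y₂) + c * (t * z₁ + (1 - t) * z₂) +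
        d * (t * y₁ + (1 - t) * y₂) * (t * z₁ + (1 - t) * z₂) := by
    intro t; rw [hα, hβ, hγ]; ring
  have hpos : ∀ t ∈ Set.Icc (0:ℝ) 1, 0 < α + β * t + γ * t ^ 2 := by
    intro t ht
    obtain ⟨ht0, ht1⟩ := ht
    have h1t : 0 ≤ 1 - t := by linarith
    rw [hQeq t]
    rcases eq_or_lt_of_le ht0 with he | he
    · rw [← he]; norm_num
      nlinarith [hg2]
    · have e1 : t ^ 2 * (a + b * y₁ + c * z₁ + d * y₁ * z₁) ≤
          a + b * (t * y₁ + (1 - t) * y₂) + c * (t * z₁ + (1 - t) * z₂) +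
            d * (t * y₁ + (1 - t) * y₂) * (t * z₁ + (1 - t) * z₂) := by
        nlinarith [mul_nonneg (mul_nonneg ha h1t) (by linarith : (0:ℝ) ≤ 1 + t),
          mul_nonneg (mul_nonneg (mul_nonneg hb ht0) h1t) hy₁,
          mul_nonneg (mul_nonneg hb h1t) hy₂,
          mul_nonneg (mul_nonneg (mul_nonneg hc ht0) h1t) hz₁,
          mul_nonneg (mul_nonneg hc h1t) hz₂,
          mul_nonneg (mul_nonneg (mul_nonneg hd ht0) h1t) (mul_nonneg hy₁ hz₂),
          mul_nonneg (mul_nonneg (mul_nonneg hd ht0) h1t) (mul_nonneg hy₂ hz₁),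
          mul_nonneg (mul_nonneg hd (mul_nonneg h1t h1t)) (mul_nonneg hy₂ hz₂)]
      have : 0 < t ^ 2 * (a + b * y₁ + c * z₁ + d * y₁ * z₁) := by positivity
      linarith
  have hkey : ∀ t ∈ Set.Ioo (0:ℝ) 1, 2*γ*(α + β*t + γ*t^2) ≤ (β + 2*γ*t)^2 := by
    intro t ht
    obtain ⟨ht0, ht1⟩ := ht
    have hQt := hpos t ⟨ht0.le, ht1.le⟩
    have hYt : 0 ≤ t * y₁ + (1 - t) * y₂ :=
      add_nonneg (mul_nonneg ht0.le hy₁) (mul_nonneg (by linarith) hy₂)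
    have hZt : 0 ≤ t * z₁ + (1 - t) * z₂ :=
      add_nonneg (mul_nonneg ht0.le hz₁) (mul_nonneg (by linarith) hz₂)
    obtain ⟨Y, hYdef⟩ : ∃ x : ℝ, x = t * y₁ + (1 - t) * y₂ := ⟨_, rfl⟩
    obtain ⟨Z, hZdef⟩ : ∃ x : ℝ, x = t * z₁ + (1 - t) * z₂ := ⟨_, rfl⟩
    rw [← hYdef] at hYt
    rw [← hZdef] at hZt
    have idβ : β + 2*γ*t = (b + d*Z) * (y₁ - y₂) + (c + d*Y) * (z₁ - z₂) := by
      rw [hβ, hγ, hYdef, hZdef]; ring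
    have idQ : α + β*t + γ*t^2 = a + b*Y + c*Z + d*Y*Z := by
      rw [hQeq t, hYdef, hZdef]
    have hQle : d * (a + b*Y + c*Z + d*Y*Z) ≤ 2 * ((b + d*Z) * (c + d*Y)) := by
      linarith [h2, mul_nonneg (mul_nonneg hb hd) hYt, mul_nonneg (mul_nonneg hc hd) hZt,
        mul_nonneg (mul_nonneg hd hd) (mul_nonneg hYt hZt)]
    rw [idβ, idQ]
    rcases le_or_gt ((y₁ - y₂) * (z₁ - z₂)) 0 with hS | hS
    · have hL : 2*γ*(a + b*Y + c*Z + d*Y*Z) ≤ 0 := by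
        rw [hγ]
        have hQt' : 0 < a + b*Y + c*Z + d*Y*Z := by rw [← idQ]; exact hQt
        nlinarith [mul_nonneg (mul_nonneg hd (neg_nonneg.2 hS)) hQt'.le]
      calc 2*γ*(a + b*Y + c*Z + d*Y*Z) ≤ 0 := hL
        _ ≤ ((b + d*Z) * (y₁ - y₂) + (c + d*Y) * (z₁ - z₂))^2 := sq_nonneg _
    · rw [hγ]
      linarith [sq_nonneg ((b + d*Z) * (y₁ - y₂) - (c + d*Y) * (z₁ - z₂)),
        mul_le_mul_of_nonneg_right hQle hS.le]
  have hcon := logQuadConcave α β γ hpos hkey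
  have hmem1 : (1:ℝ) ∈ Set.Icc (0:ℝ) 1 := by norm_num
  have hmem0 : (0:ℝ) ∈ Set.Icc (0:ℝ) 1 := by norm_num
  have hkc := hcon.2 hmem1 hmem0 hl0 (by linarith : 0 ≤ 1 - l) (by ring)
  simp only [smul_eq_mul, mul_one, mul_zero, add_zero] at hkc
  rw [show α + β + γ * 1 ^ 2 = a + b * y₁ + c * z₁ + d * y₁ * z₁ by rw [hα, hβ, hγ]; ring,
    show α + γ * 0 ^ 2 = a + b * y₂ + c * z₂ + d * y₂ * z₂ by rw [hα]; ring] at hkc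
  have hql : 0 < α + β * l + γ * l ^ 2 := hpos l ⟨hl0, hl1⟩
  calc (a + b * y₁ + c * z₁ + d * y₁ * z₁) ^ l *
        (a + b * y₂ + c * z₂ + d * y₂ * z₂) ^ (1 - l)
      = Real.exp (l * Real.log (a + b * y₁ + c * z₁ + d * y₁ * z₁) +
          (1 - l) * Real.log (a + b * y₂ + c * z₂ + d * y₂ * z₂)) := by
        rw [Real.rpow_def_of_pos hg1, Real.rpow_def_of_pos hg2, ← Real.exp_add]
        congr 1; ring
    _ ≤ Real.exp (Real.log (α + β * l + γ * l ^ 2)) := Real.exp_le_exp.2 hkc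
    _ = α + β * l + γ * l ^ 2 := Real.exp_log hql
    _ = _ := hQeq l


set_option maxHeartbeats 1000000 in
lemma forward_dir (a b c d : ℝ) (ha : 0 ≤ a) (hb : 0 ≤ b) (hc : 0 ≤ c) (hd : 0 ≤ d)
    (H : ∀ y₁ z₁ y₂ z₂ : ℝ, 0 ≤ y₁ → 0 ≤ z₁ → 0 ≤ y₂ → 0 ≤ z₂ →
        ∀ l : ℝ, 0 ≤ l → l ≤ 1 →
          (a + b * y₁ + c * z₁ + d * y₁ * z₁) ^ l *
              (a + b * y₂ + c * z₂ + d * y₂ * z₂) ^ (1 - l) ≤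
            a + b * (l * y₁ + (1 - l) * y₂) + c * (l * z₁ + (1 - l) * z₂) +
              d * (l * y₁ + (1 - l) * y₂) * (l * z₁ + (1 - l) * z₂)) :
    a * d ≤ 2 * (b * c) := by
  by_contra hcontra
  push_neg at hcontra
  have had : 0 < a * d := lt_of_le_of_lt (by positivity) hcontra
  have ha' : 0 < a := by
    rcases ha.lt_or_eq with h | h
    · exact h
    · exfalso; rw [← h] at had; simp at had
  have hd' : 0 < d := by
    rcases hd.lt_or_eq with h | h
    · exact h
    · exfalso; rw [← h] at had; simp at had
  have hK : 0 < a * d - 2 * (b * c) := by linarith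
  obtain ⟨ε, hεdef⟩ : ∃ x : ℝ, x = (a * d - 2 * (b * c)) / (b + c + 1) := ⟨_, rfl⟩
  have hbc1 : 0 < b + c + 1 := by linarith
  have hε : 0 < ε := by rw [hεdef]; exact div_pos hK hbc1
  have hεK : ε * (b + c + 1) = a * d - 2 * (b * c) := by
    rw [hεdef]; field_simp
  have hεbc : ε * (b + c) ≤ 2 * (a * d - 2 * (b * c)) := by nlinarith
  have hv1 : 0 < c + ε := by linarith
  have hv2 : 0 < b + ε := by linarith
  obtain ⟨B, hBdef⟩ : ∃ x : ℝ, x = b * (c + ε) + c * (b + ε) := ⟨_, rfl⟩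
  obtain ⟨V, hVdef⟩ : ∃ x : ℝ, x = (c + ε) * (b + ε) := ⟨_, rfl⟩
  have hB0 : 0 ≤ B := by
    rw [hBdef]; exact add_nonneg (mul_nonneg hb hv1.le) (mul_nonneg hc hv2.le)
  have hV0 : 0 < V := by rw [hVdef]; exact mul_pos hv1 hv2
  have hF : 0 < 2 * a * d * V - B ^ 2 := by
    rw [hBdef, hVdef]
    nlinarith [mul_le_mul_of_nonneg_right hεbc (mul_nonneg hε.le (add_nonneg hb hc)),
      mul_pos (mul_pos ha' hd') (mul_pos hε hε),
      mul_nonneg (mul_nonneg hb hc) hK.le]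
  have hdenom : 0 < 2 * B * d * V + d ^ 2 * V ^ 2 + 1 := by positivity
  obtain ⟨t, htdef⟩ : ∃ x : ℝ,
      x = min 1 ((2 * a * d * V - B ^ 2) / (2 * B * d * V + d ^ 2 * V ^ 2 + 1)) := ⟨_, rfl⟩
  have ht0 : 0 < t := by
    rw [htdef]; exact lt_min one_pos (div_pos hF hdenom)
  have ht1 : t ≤ 1 := by rw [htdef]; exact min_le_left _ _
  have htden : t * (2 * B * d * V + d ^ 2 * V ^ 2 + 1) ≤ 2 * a * d * V - B ^ 2 := by
    have h := min_le_right 1 ((2 * a * d * V - B ^ 2) / (2 * B * d * V + d ^ 2 * V ^ 2 + 1))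
    rw [← htdef] at h
    exact (le_div_iff₀ hdenom).1 h
  have ht2 : t ^ 2 ≤ t := by nlinarith
  have h5 : 2 * t * B * d * V + t ^ 2 * d ^ 2 * V ^ 2 < 2 * a * d * V - B ^ 2 := by
    have h6 : t ^ 2 * (d ^ 2 * V ^ 2) ≤ t * (d ^ 2 * V ^ 2) :=
      mul_le_mul_of_nonneg_right ht2 (by positivity)
    nlinarith
  -- instantiate the hypothesis
  have key := H (2 * t * (c + ε)) (2 * t * (b + ε)) 0 0
    (by positivity) (by positivity) le_rfl le_rfl (1/2) (by norm_num) (by norm_num)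
  have hGeq : a + b * (2 * t * (c + ε)) + c * (2 * t * (b + ε)) +
      d * (2 * t * (c + ε)) * (2 * t * (b + ε)) = a + 2 * t * B + 4 * t ^ 2 * d * V := by
    rw [hBdef, hVdef]; ring
  have hg2eq : a + b * 0 + c * 0 + d * 0 * 0 = a := by ring
  have hmeq : a + b * (1/2 * (2 * t * (c + ε)) + (1 - 1/2) * 0) +
      c * (1/2 * (2 * t * (b + ε)) + (1 - 1/2) * 0) +
      d * (1/2 * (2 * t * (c + ε)) + (1 - 1/2) * 0) *
        (1/2 * (2 * t * (b + ε)) + (1 - 1/2) * 0) = a + t * B + t ^ 2 * d * V := by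
    rw [hBdef, hVdef]; ring
  rw [hGeq, hg2eq, hmeq] at key
  have h12 : (1:ℝ) - 1/2 = 1/2 := by norm_num
  rw [h12] at key
  have hG0 : 0 ≤ a + 2 * t * B + 4 * t ^ 2 * d * V := by positivity
  have hm0 : 0 ≤ a + t * B + t ^ 2 * d * V := by positivity
  have key2 : ((a + 2 * t * B + 4 * t ^ 2 * d * V) * a) ^ ((1:ℝ)/2) ≤
      a + t * B + t ^ 2 * d * V := by
    rw [Real.mul_rpow hG0 ha]; exact key
  have hsq : (a + 2 * t * B + 4 * t ^ 2 * d * V) * a ≤ (a + t * B + t ^ 2 * d * V) ^ 2 := by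
    have h' := pow_le_pow_left₀ (Real.rpow_nonneg (mul_nonneg hG0 ha) _) key2 2
    rwa [← Real.rpow_natCast (((a + 2 * t * B + 4 * t ^ 2 * d * V) * a) ^ ((1:ℝ)/2)) 2,
      ← Real.rpow_mul (mul_nonneg hG0 ha), show (1:ℝ)/2 * (2:ℕ) = 1 by norm_num,
      Real.rpow_one] at h'
  have hfinal : (a + t * B + t ^ 2 * d * V) ^ 2 < (a + 2 * t * B + 4 * t ^ 2 * d * V) * a := by
    nlinarith [mul_pos (mul_pos ht0 ht0)
      (sub_pos.2 h5)]
  linarith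

/-- The bivariate multiaffine polynomial `g(y,z) = a + by + cz + dyz` with nonnegative
coefficients is log-concave on the positive orthant if and only if `2bc ≥ ad`. -/
theorem bivariate_logConcave_iff
    (a b c d : ℝ) (ha : 0 ≤ a) (hb : 0 ≤ b) (hc : 0 ≤ c) (hd : 0 ≤ d) :
    (∀ y₁ z₁ y₂ z₂ : ℝ, 0 ≤ y₁ → 0 ≤ z₁ → 0 ≤ y₂ → 0 ≤ z₂ →
        ∀ l : ℝ, 0 ≤ l → l ≤ 1 →
          (a + b * y₁ + c * z₁ + d * y₁ * z₁) ^ l *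
              (a + b * y₂ + c * z₂ + d * y₂ * z₂) ^ (1 - l) ≤
            a + b * (l * y₁ + (1 - l) * y₂) + c * (l * z₁ + (1 - l) * z₂) +
              d * (l * y₁ + (1 - l) * y₂) * (l * z₁ + (1 - l) * z₂)) ↔
      a * d ≤ 2 * (b * c) := by
  constructor
  · intro H
    exact forward_dir a b c d ha hb hc hd H
  · intro h2 y₁ z₁ y₂ z₂ hy₁ hz₁ hy₂ hz₂ l hl0 hl1
    exact reverse_dir a b c d ha hb hc hd h2 y₁ z₁ y₂ z₂ hy₁ hz₁ hy₂ hz₂ l hl0 hl1
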